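/- Let $(S_n)$ be a random walk with $S_0 = 1$ and i.i.d. integer increments $\xi_i$ satisfying $\xi_i \le 1$, $\mathbb{E}[\xi_1] = 0$, and $\mathbb{P}(\xi_1 = -k)$ regularly varying of index $-5/2$. Let $\tau = \inf\{n \ge 1 : S_n \le 0\}$ and let $\mathcal{R}_n = (-\xi_n)^+$. Then for every $n$ and every $k \ge 0$, the events $\{\tau > n\}$ and $\{\mathcal{R}_n > k\}$ are negatively correlated: $\mathbb{P}(\tau > n, \mathcal{R}_n > k) \le \mathbb{P}(\tau > n)\,\mathbb{P}(\mathcal{R}_n > k)$. -/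

import Mathlib

open MeasureTheory ProbabilityTheory Filter

/-- One-dimensional negative correlation of an up-set and a down-set of `ℤ`. -/
lemma oneDim_neg_corr (ν : Measure ℤ) [IsProbabilityMeasure ν] (s t : ℤ) :
    ν {x | s < x ∧ x < t} ≤ ν {x | s < x} * ν {x | x < t} := by
  by_cases h : s < t
  · have hD : MeasurableSet {x : ℤ | x < t} := (Set.to_countable _).measurableSet
    have hpart : ν {x | s < x ∧ x < t} + ν ({x : ℤ | x < t}ᶜ) = ν {x : ℤ | s < x} := by
      have h0 := measure_inter_add_diff (μ := ν) {x : ℤ | s < x} hD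
      have h1 : {x : ℤ | s < x} ∩ {x | x < t} = {x | s < x ∧ x < t} := rfl
      have h2 : {x : ℤ | s < x} \ {x | x < t} = {x : ℤ | x < t}ᶜ := by
        ext x
        simp only [Set.mem_diff, Set.mem_setOf_eq, Set.mem_compl_iff, not_lt]
        omega
      rw [h1, h2] at h0; exact h0
    have key : ν {x : ℤ | s < x} ≤ ν {x : ℤ | s < x} * ν {x | x < t} + ν ({x : ℤ | x < t}ᶜ) := by
      have h1 : ν {x : ℤ | x < t} + ν ({x : ℤ | x < t}ᶜ) = 1 := prob_add_prob_compl hD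
      calc ν {x : ℤ | s < x} = ν {x : ℤ | s < x} * 1 := (mul_one _).symm
        _ = ν {x : ℤ | s < x} * ν {x | x < t} + ν {x : ℤ | s < x} * ν ({x : ℤ | x < t}ᶜ) := by
            rw [← mul_add, h1]
        _ ≤ _ := by
            gcongr
            exact mul_le_of_le_one_left zero_le prob_le_one
    rw [← ENNReal.add_le_add_iff_right (measure_ne_top ν ({x : ℤ | x < t}ᶜ)), hpart]
    exact key
  · have he : {x : ℤ | s < x ∧ x < t} = ∅ := by
      ext x; simp only [Set.mem_setOf_eq, Set.mem_empty_iff_false, iff_false, not_and]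
      omega
    rw [he]; simp

/-- Negative correlation of survival and jump size: for the exploration walk
`S_n = 1 + ξ₁ + ⋯ + ξ_n` (i.i.d. integer steps with `ξ ≤ 1`, mean `0`, and
left tail `ℙ(ξ = -k) ~ c k^{-5/2}`, a regularly varying tail of index `-5/2`),
with `τ = inf{n ≥ 1 : S_n ≤ 0}` and `ℛ_n = (-ξ_n)⁺`, the events `{τ > n}` and
`{ℛ_n > k}` are negatively correlated. -/
theorem survival_jump_negative_correlation
    {Ω : Type*} [MeasureSpace Ω] [IsProbabilityMeasure (ℙ : Measure Ω)]
    (ξ : ℕ → Ω → ℤ) (c : ℝ) (hc : 0 < c)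
    (hmeas : ∀ i, Measurable (ξ i))
    (hindep : iIndepFun ξ ℙ)
    (hident : ∀ i, IdentDistrib (ξ i) (ξ 0) ℙ ℙ)
    (hbound : ∀ i, ∀ᵐ ω ∂(ℙ : Measure Ω), ξ i ω ≤ 1)
    (hint : Integrable (fun ω => (ξ 0 ω : ℝ)) ℙ)
    (hmean : ∫ ω, (ξ 0 ω : ℝ) ∂ℙ = 0)
    (htail : Tendsto
      (fun k : ℕ => (ℙ {ω | ξ 0 ω = -(k : ℤ)}).toReal * (k : ℝ) ^ ((5 : ℝ) / 2))
      atTop (nhds c))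
    (n : ℕ) (hn : 1 ≤ n) (k : ℕ) :
    ℙ ({ω | ∀ m : ℕ, 1 ≤ m → m ≤ n → 0 < 1 + ∑ i ∈ Finset.range m, ξ i ω}
        ∩ {ω | (k : ℤ) < max (-(ξ (n - 1) ω)) 0})
      ≤ ℙ {ω | ∀ m : ℕ, 1 ≤ m → m ≤ n → 0 < 1 + ∑ i ∈ Finset.range m, ξ i ω}
        * ℙ {ω | (k : ℤ) < max (-(ξ (n - 1) ω)) 0} := by
  obtain ⟨N, rfl⟩ : ∃ N, n = N + 1 := ⟨n - 1, (Nat.succ_pred_eq_of_pos hn).symm⟩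
  have hNn : N + 1 - 1 = N := rfl
  rw [hNn]
  -- the first N steps and the last step
  set X : Ω → ℤ := ξ N with hXdef
  set Y : Ω → (Fin N → ℤ) := fun ω i => ξ i ω with hYdef
  set J : Ω → (Fin N → ℤ) × ℤ := fun ω => (Y ω, X ω) with hJdef
  set ybar : (Fin N → ℤ) → ℕ → ℤ := fun y i => if h : i < N then y ⟨i, h⟩ else 0 with hybar
  set E' : (Fin N → ℤ) → Prop :=
    fun y => ∀ m : ℕ, 1 ≤ m → m ≤ N → 0 < 1 + ∑ i ∈ Finset.range m, ybar y i with hE'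
  set s' : (Fin N → ℤ) → ℤ := fun y => -(1 + ∑ i ∈ Finset.range N, ybar y i) with hs'
  set SA : Set ((Fin N → ℤ) × ℤ) := {p | E' p.1 ∧ s' p.1 < p.2} with hSA
  set SB : Set ((Fin N → ℤ) × ℤ) := {p | p.2 < -(k : ℤ)} with hSB
  have hsum : ∀ ω, ∀ m : ℕ, m ≤ N →
      ∑ i ∈ Finset.range m, ybar (Y ω) i = ∑ i ∈ Finset.range m, ξ i ω := by
    intro ω m hm
    refine Finset.sum_congr rfl fun i hi => ?_
    have hiN : i < N := lt_of_lt_of_le (Finset.mem_range.mp hi) hm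
    simp only [hybar, hYdef, dif_pos hiN]
  -- identification of the events
  have hA : {ω | ∀ m : ℕ, 1 ≤ m → m ≤ N + 1 → 0 < 1 + ∑ i ∈ Finset.range m, ξ i ω}
      = J ⁻¹' SA := by
    ext ω
    simp only [Set.mem_setOf_eq, Set.mem_preimage, hSA, hJdef, hE', hs']
    constructor
    · intro h
      refine ⟨fun m h1 h2 => ?_, ?_⟩
      · rw [hsum ω m h2]; exact h m h1 (h2.trans (Nat.le_succ N))
      · have h3 := h (N + 1) (by omega) le_rfl
        rw [Finset.sum_range_succ] at h3
        rw [hsum ω N le_rfl]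
        have : X ω = ξ N ω := rfl
        omega
    · rintro ⟨h1, h2⟩ m hm1 hm2
      by_cases hm : m ≤ N
      · have := h1 m hm1 hm; rwa [hsum ω m hm] at this
      · have hmN : m = N + 1 := by omega
        subst hmN
        rw [Finset.sum_range_succ]
        rw [hsum ω N le_rfl] at h2
        have : X ω = ξ N ω := rfl
        omega
  have hB : {ω | (k : ℤ) < max (-(X ω)) 0} = J ⁻¹' SB := by
    ext ω
    simp only [Set.mem_setOf_eq, Set.mem_preimage, hSB, hJdef, lt_max_iff]
    have : X ω = ξ N ω := rfl
    omega
  -- measurability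
  have hYm : Measurable Y := measurable_pi_lambda _ fun i => hmeas i
  have hXm : Measurable X := hmeas N
  have hJm : Measurable J := hYm.prodMk hXm
  have hSAm : MeasurableSet SA := (Set.to_countable _).measurableSet
  have hSBm : MeasurableSet SB := (Set.to_countable _).measurableSet
  -- independence of Y and X
  have hIndep : IndepFun Y X ℙ := by
    have hdisj : Disjoint (Finset.range N) ({N} : Finset ℕ) := by
      simp only [Finset.disjoint_left, Finset.mem_range, Finset.mem_singleton]
      omega
    have h0 := hindep.indepFun_finset (Finset.range N) ({N} : Finset ℕ) hdisj hmeas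
    have hφ : Measurable fun (f : ↥(Finset.range N) → ℤ) (i : Fin N) =>
        f ⟨i.val, Finset.mem_range.mpr i.isLt⟩ :=
      measurable_pi_lambda _ fun i => measurable_pi_apply _
    have hψ : Measurable fun (f : ↥({N} : Finset ℕ) → ℤ) =>
        f ⟨N, Finset.mem_singleton_self N⟩ := measurable_pi_apply _
    exact h0.comp hφ hψ
  have hmap : Measure.map J ℙ = (Measure.map Y ℙ).prod (Measure.map X ℙ) :=
    (indepFun_iff_map_prod_eq_prod_map_map hYm.aemeasurable hXm.aemeasurable).mp hIndep
  have hPX : IsProbabilityMeasure (Measure.map X ℙ) := Measure.isProbabilityMeasure_map hXm.aemeasurable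
  have hPY : IsProbabilityMeasure (Measure.map Y ℙ) := Measure.isProbabilityMeasure_map hYm.aemeasurable
  -- rewrite the three probabilities through the joint law
  rw [hA, hB, ← Set.preimage_inter,
    ← Measure.map_apply hJm (hSAm.inter hSBm),
    ← Measure.map_apply hJm hSAm]
  have hBval : ℙ (J ⁻¹' SB) = (Measure.map X ℙ) {x | x < -(k : ℤ)} := by
    rw [Measure.map_apply hXm ((Set.to_countable _).measurableSet)]
    rfl
  rw [hBval, hmap, Measure.prod_apply (hSAm.inter hSBm), Measure.prod_apply hSAm]
  -- slicewise bound
  have hslice : ∀ y : Fin N → ℤ,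
      (Measure.map X ℙ) (Prod.mk y ⁻¹' (SA ∩ SB))
        ≤ (Measure.map X ℙ) (Prod.mk y ⁻¹' SA) * (Measure.map X ℙ) {x | x < -(k : ℤ)} := by
    intro y
    have h1 : Prod.mk y ⁻¹' (SA ∩ SB) = {x : ℤ | (E' y ∧ s' y < x) ∧ x < -(k : ℤ)} := rfl
    have h2 : Prod.mk y ⁻¹' SA = {x : ℤ | E' y ∧ s' y < x} := rfl
    rw [h1, h2]
    by_cases hE : E' y
    · have e1 : {x : ℤ | (E' y ∧ s' y < x) ∧ x < -(k : ℤ)}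
          = {x : ℤ | s' y < x ∧ x < -(k : ℤ)} := by
        ext x; simp only [Set.mem_setOf_eq]; tauto
      have e2 : {x : ℤ | E' y ∧ s' y < x} = {x : ℤ | s' y < x} := by
        ext x; simp only [Set.mem_setOf_eq]; tauto
      rw [e1, e2]
      exact oneDim_neg_corr (Measure.map X ℙ) (s' y) (-(k : ℤ))
    · have h3 : {x : ℤ | (E' y ∧ s' y < x) ∧ x < -(k : ℤ)} = ∅ := by
        ext x; simp [hE]
      rw [h3]; simp
  calc ∫⁻ y, (Measure.map X ℙ) (Prod.mk y ⁻¹' (SA ∩ SB)) ∂(Measure.map Y ℙ)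
      ≤ ∫⁻ y, (Measure.map X ℙ) (Prod.mk y ⁻¹' SA) * (Measure.map X ℙ) {x | x < -(k : ℤ)} ∂(Measure.map Y ℙ) :=
        lintegral_mono hslice
    _ = (∫⁻ y, (Measure.map X ℙ) (Prod.mk y ⁻¹' SA) ∂(Measure.map Y ℙ)) * (Measure.map X ℙ) {x | x < -(k : ℤ)} :=
        lintegral_mul_const _ (measurable_of_countable _)
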